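/- Let f : ℂ → ℂ be complex differentiable at z and let c ∈ ℂ with c ≠ 0. Then V_{c·f}(z) = λ · V_f(z), where λ = |c|² · (1 + |f(z)|⁴) / (1 + |c|⁴·|f(z)|⁴) is a strictly positive real number; hence the desingularized Newton fields of f and of c·f are positively proportional at every point, so all members of the class [f] = {c·f : c ≠ 0} have identical phase portraits. -/

import Mathlib

open Complex

/-- The desingularized Newton field of `f`. -/
noncomputable def desingNewton (f : ℂ → ℂ) (z : ℂ) : ℂ :=
  -(((1 + ‖f z‖ ^ 4 : ℝ) : ℂ))⁻¹ * (starRingEnd ℂ) (deriv f z) * f z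

/-- The desingularized Newton fields of `f` and of `c·f` (`c ≠ 0`) are
positively proportional, with factor `λ = |c|²(1+|f z|⁴)/(1+|c|⁴|f z|⁴) > 0`. -/
theorem desingNewton_scaling
    (f : ℂ → ℂ) (z : ℂ) (hf : DifferentiableAt ℂ f z) (c : ℂ) (hc : c ≠ 0) :
    0 < ‖c‖ ^ 2 * (1 + ‖f z‖ ^ 4) /
        (1 + ‖c‖ ^ 4 * ‖f z‖ ^ 4) ∧
    desingNewton (fun w => c * f w) z =
      ((‖c‖ ^ 2 * (1 + ‖f z‖ ^ 4) /
        (1 + ‖c‖ ^ 4 * ‖f z‖ ^ 4) : ℝ) : ℂ) * desingNewton f z := by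
  have hca : ‖c‖ ≠ 0 := norm_ne_zero_iff.mpr hc
  constructor
  · positivity
  · have hd : deriv (fun w => c * f w) z = c * deriv f z := deriv_const_mul c hf
    have h1 : (1 + ‖f z‖ ^ 4 : ℝ) ≠ 0 := by positivity
    have h2 : (1 + ‖c‖ ^ 4 * ‖f z‖ ^ 4 : ℝ) ≠ 0 := by positivity
    have h1' : ((1:ℂ) + (‖f z‖ : ℂ) ^ 4) ≠ 0 := by
      exact_mod_cast h1
    have h2' : ((1:ℂ) + (‖c‖ : ℂ) ^ 4 * (‖f z‖ : ℂ) ^ 4) ≠ 0 := by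
      have := h2; exact_mod_cast this
    have hcc : (starRingEnd ℂ) c * c = ((‖c‖ : ℂ)) ^ 2 := by
      rw [mul_comm, Complex.mul_conj]
      norm_cast
      rw [Complex.sq_norm]
    simp only [desingNewton, hd, map_mul, norm_mul, mul_pow]
    push_cast
    field_simp
    linear_combination (-((starRingEnd ℂ) (deriv f z) * f z)) * hcc
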